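/- Let L be a real symmetric 4×4 matrix indexed by {β₁, β₂, α₁, α₂} with L(β₁,β₂) = L(α₁,α₂) = 0 and L(β_j, α_k) ≠ 0 for all j, k ∈ {1,2} (so the associated graph is the 4-cycle β₁–α₁–β₂–α₂–β₁). Suppose L(α₁,α₁) = L(α₂,α₂). Then the complex vector space of C¹ solutions u : [0,1] → ℂ⁴ of ∂ₜu(t,·) = i·L u(t,·) satisfying u(t,β₁) = u(t,β₂) = 0 for all t ∈ [0,1] has dimension 2 − rank((L(β_j, α_k))_{j,k=1,2}). -/

import Mathlib

open Set

section Aux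

lemma expDeriv (c : ℂ) (t : ℝ) :
    HasDerivAt (fun x : ℝ => Complex.exp (c * x)) (c * Complex.exp (c * t)) t := by
  have h1 : HasDerivAt (fun x : ℝ => (x : ℂ)) 1 t := by
    simpa using (hasDerivAt_id t).ofReal_comp
  simpa [mul_comm] using (h1.const_mul c).cexp

/-- solutions of `f' = c f` on `[0,1]`. -/
lemma exp_rep (c : ℂ) (f : ℝ → ℂ)
    (hf : ∀ t ∈ Icc (0:ℝ) 1, HasDerivWithinAt f (c * f t) (Icc (0:ℝ) 1) t) :
    ∀ t ∈ Icc (0:ℝ) 1, f t = Complex.exp (c * t) * f 0 := by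
  set g : ℝ → ℂ := fun s => Complex.exp (-c * s) * f s with hg
  have hgd : ∀ t ∈ Icc (0:ℝ) 1, HasDerivWithinAt g 0 (Icc (0:ℝ) 1) t := by
    intro t ht
    have h1 := ((expDeriv (-c) t).hasDerivWithinAt (s := Icc (0:ℝ) 1)).mul (hf t ht)
    exact h1.congr_deriv (by ring)
  have hcont : ContinuousOn g (Icc 0 1) := fun x hx => (hgd x hx).continuousWithinAt
  have key := constant_of_has_deriv_right_zero hcont (fun x hx =>
    (hgd x (Ico_subset_Icc_self hx)).mono_of_mem_nhdsWithin (Icc_mem_nhdsGE_of_mem hx))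
  intro t ht
  have h2 := key t ht
  have h3 : Complex.exp (-c * t) * f t = f 0 := by simpa [hg] using h2
  have hne : Complex.exp (-c * t) ≠ 0 := Complex.exp_ne_zero _
  have : Complex.exp (c * t) * (Complex.exp (-c * t) * f t) = Complex.exp (c * t) * f 0 := by
    rw [h3]
  rw [← mul_assoc, ← Complex.exp_add] at this
  simpa using this

end Aux

/-- The complex vector space of C¹ solutions of `∂ₜu(t,α) = i·Σ_η L(α,η)u(t,η)` on
`[0,1]` that vanish on `B` for all `t ∈ [0,1]`.  A solution on `[0,1]` is encoded as a
function on `ℝ` satisfying the equation on `[0,1]` (in the sense of one-sided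
derivatives at the endpoints) and frozen outside `[0,1]`, so that this space is in
canonical linear bijection with the space of C¹ solutions on `[0,1]`. -/
noncomputable def solSpace {ι : Type*} [Fintype ι] (L : ι → ι → ℝ) (B : Set ι) :
    Submodule ℂ (ℝ → ι → ℂ) where
  carrier := {u |
    (∀ α, ∀ t ∈ Icc (0:ℝ) 1,
      HasDerivWithinAt (fun s => u s α) (Complex.I * ∑ η, (L α η : ℂ) * u t η)
        (Icc (0:ℝ) 1) t) ∧
    (∀ t ≤ (0:ℝ), u t = u 0) ∧ (∀ t, (1:ℝ) ≤ t → u t = u 1) ∧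
    (∀ β ∈ B, ∀ t ∈ Icc (0:ℝ) 1, u t β = 0)}
  zero_mem' := by
    refine ⟨fun α t ht => ?_, fun t _ => rfl, fun t _ => rfl, fun β _ t _ => rfl⟩
    simpa using (hasDerivWithinAt_const t (Icc (0:ℝ) 1) (0:ℂ))
  add_mem' := by
    rintro u v ⟨hu1, hu2, hu3, hu4⟩ ⟨hv1, hv2, hv3, hv4⟩
    refine ⟨fun α t ht => ?_, fun t ht => ?_, fun t ht => ?_, fun β hβ t ht => ?_⟩
    · have h := (hu1 α t ht).add (hv1 α t ht)
      have : Complex.I * ∑ η, (L α η : ℂ) * u t η + Complex.I * ∑ η, (L α η : ℂ) * v t η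
          = Complex.I * ∑ η, (L α η : ℂ) * (u + v) t η := by
        simp [Pi.add_apply, mul_add, Finset.sum_add_distrib]
      rw [← this]
      exact h
    · simp [Pi.add_apply, hu2 t ht, hv2 t ht]
    · simp [Pi.add_apply, hu3 t ht, hv3 t ht]
    · simp [Pi.add_apply, hu4 β hβ t ht, hv4 β hβ t ht]
  smul_mem' := by
    rintro c u ⟨hu1, hu2, hu3, hu4⟩
    refine ⟨fun α t ht => ?_, fun t ht => ?_, fun t ht => ?_, fun β hβ t ht => ?_⟩
    · have h := (hu1 α t ht).const_mul c
      have : c * (Complex.I * ∑ η, (L α η : ℂ) * u t η)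
          = Complex.I * ∑ η, (L α η : ℂ) * (c • u) t η := by
        simp only [Pi.smul_apply, smul_eq_mul, Finset.mul_sum]
        exact Finset.sum_congr rfl fun η _ => by ring
      rw [← this]
      exact h
    · simp [Pi.smul_apply, hu2 t ht]
    · simp [Pi.smul_apply, hu3 t ht]
    · simp [Pi.smul_apply, hu4 β hβ t ht]

section Aux2

/-- clamp to `[0,1]`. -/
noncomputable def cl (t : ℝ) : ℝ := max 0 (min t 1)

lemma cl_eq {t : ℝ} (ht : t ∈ Icc (0:ℝ) 1) : cl t = t := by
  unfold cl
  rw [min_eq_left ht.2, max_eq_right ht.1]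

lemma cl_le {t : ℝ} (ht : t ≤ 0) : cl t = 0 := by
  unfold cl
  rw [min_eq_left (ht.trans zero_le_one), max_eq_left ht]

lemma cl_ge {t : ℝ} (ht : 1 ≤ t) : cl t = 1 := by
  unfold cl
  rw [min_eq_right ht, max_eq_right zero_le_one]

/-- the explicit solution in the singular case. -/
noncomputable def sol1 (L : Matrix (Fin 4) (Fin 4) ℝ) : ℝ → Fin 4 → ℂ :=
  fun t α => ![0, 0, ((L 0 3 : ℝ) : ℂ), (-(L 0 2 : ℝ) : ℂ)] α *
    Complex.exp (Complex.I * (L 2 2 : ℝ) * (cl t : ℝ))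

lemma sol_facts (L : Matrix (Fin 4) (Fin 4) ℝ) (hαα : L 2 3 = 0) (h32 : L 3 2 = 0)
    (u : ℝ → Fin 4 → ℂ) (hu : u ∈ solSpace (fun a b => L a b) ({0, 1} : Set (Fin 4))) :
    (∀ t, u t 0 = 0) ∧ (∀ t, u t 1 = 0) ∧
    (∀ t ∈ Icc (0:ℝ) 1, (L 0 2 : ℂ) * u t 2 + (L 0 3 : ℂ) * u t 3 = 0) ∧
    (∀ t ∈ Icc (0:ℝ) 1, (L 1 2 : ℂ) * u t 2 + (L 1 3 : ℂ) * u t 3 = 0) ∧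
    (∀ t ∈ Icc (0:ℝ) 1, u t 2 = Complex.exp (Complex.I * (L 2 2 : ℝ) * t) * u 0 2) ∧
    (∀ t ∈ Icc (0:ℝ) 1, u t 3 = Complex.exp (Complex.I * (L 3 3 : ℝ) * t) * u 0 3) := by
  obtain ⟨h1, h2, h3, h4⟩ := hu
  have hu0 : ∀ t, u t 0 = 0 := by
    intro t
    rcases le_total t 0 with h | h
    · rw [h2 t h]; exact h4 0 (by simp) 0 ⟨le_rfl, zero_le_one⟩
    rcases le_total 1 t with h' | h'
    · rw [h3 t h']; exact h4 0 (by simp) 1 ⟨zero_le_one, le_rfl⟩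
    · exact h4 0 (by simp) t ⟨h, h'⟩
  have hu1 : ∀ t, u t 1 = 0 := by
    intro t
    rcases le_total t 0 with h | h
    · rw [h2 t h]; exact h4 1 (by simp) 0 ⟨le_rfl, zero_le_one⟩
    rcases le_total 1 t with h' | h'
    · rw [h3 t h']; exact h4 1 (by simp) 1 ⟨zero_le_one, le_rfl⟩
    · exact h4 1 (by simp) t ⟨h, h'⟩
  have hbeta : ∀ β : Fin 4, (∀ t, u t β = 0) → ∀ t ∈ Icc (0:ℝ) 1,
      Complex.I * ∑ η, ((L β η : ℝ) : ℂ) * u t η = 0 := by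
    intro β hβ t ht
    have hz : HasDerivWithinAt (fun s => u s β) 0 (Icc (0:ℝ) 1) t := by
      have he : (fun s => u s β) = fun _ => (0:ℂ) := funext fun s => hβ s
      rw [he]; exact hasDerivWithinAt_const t _ 0
    have e1 := (h1 β t ht).derivWithin (uniqueDiffOn_Icc zero_lt_one t ht)
    have e2 := hz.derivWithin (uniqueDiffOn_Icc zero_lt_one t ht)
    rw [e1] at e2
    exact e2
  have heq0 : ∀ t ∈ Icc (0:ℝ) 1, (L 0 2 : ℂ) * u t 2 + (L 0 3 : ℂ) * u t 3 = 0 := by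
    intro t ht
    have := hbeta 0 hu0 t ht
    rw [Fin.sum_univ_four, hu0 t, hu1 t] at this
    have h' : (Complex.I)⁻¹ * (Complex.I * ((L 0 0 : ℂ) * 0 + (L 0 1 : ℂ) * 0 +
        (L 0 2 : ℂ) * u t 2 + (L 0 3 : ℂ) * u t 3)) = 0 := by rw [this]; ring
    rw [← mul_assoc, inv_mul_cancel₀ Complex.I_ne_zero, one_mul] at h'
    linear_combination h'
  have heq1 : ∀ t ∈ Icc (0:ℝ) 1, (L 1 2 : ℂ) * u t 2 + (L 1 3 : ℂ) * u t 3 = 0 := by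
    intro t ht
    have := hbeta 1 hu1 t ht
    rw [Fin.sum_univ_four, hu0 t, hu1 t] at this
    have h' : (Complex.I)⁻¹ * (Complex.I * ((L 1 0 : ℂ) * 0 + (L 1 1 : ℂ) * 0 +
        (L 1 2 : ℂ) * u t 2 + (L 1 3 : ℂ) * u t 3)) = 0 := by rw [this]; ring
    rw [← mul_assoc, inv_mul_cancel₀ Complex.I_ne_zero, one_mul] at h'
    linear_combination h'
  refine ⟨hu0, hu1, heq0, heq1, ?_, ?_⟩
  · refine exp_rep _ _ (fun t ht => ?_)
    have := h1 2 t ht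
    have hs : Complex.I * ∑ η, ((L 2 η : ℝ) : ℂ) * u t η
        = Complex.I * (L 2 2 : ℝ) * u t 2 := by
      rw [Fin.sum_univ_four, hu0 t, hu1 t, hαα]
      push_cast
      ring
    rwa [hs] at this
  · refine exp_rep _ _ (fun t ht => ?_)
    have := h1 3 t ht
    have hs : Complex.I * ∑ η, ((L 3 η : ℝ) : ℂ) * u t η
        = Complex.I * (L 3 3 : ℝ) * u t 3 := by
      rw [Fin.sum_univ_four, hu0 t, hu1 t, h32]
      push_cast
      ring
    rwa [hs] at this

lemma sol1_mem (L : Matrix (Fin 4) (Fin 4) ℝ) (hαα : L 2 3 = 0) (h32 : L 3 2 = 0)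
    (hdiag : L 2 2 = L 3 3) (hdet : L 0 2 * L 1 3 - L 0 3 * L 1 2 = 0) :
    sol1 L ∈ solSpace (fun a b => L a b) ({0, 1} : Set (Fin 4)) := by
  have hdetC : (L 0 2 : ℂ) * (L 1 3 : ℂ) - (L 0 3 : ℂ) * (L 1 2 : ℂ) = 0 := by
    exact_mod_cast congrArg (fun x : ℝ => (x : ℂ)) hdet
  have hdiagC : (L 2 2 : ℂ) = (L 3 3 : ℂ) := by exact_mod_cast hdiag
  have hααC : (L 2 3 : ℂ) = 0 := by exact_mod_cast hαα
  have h32C : (L 3 2 : ℂ) = 0 := by exact_mod_cast h32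
  refine ⟨?_, ?_, ?_, ?_⟩
  · intro α t ht
    have hE : HasDerivWithinAt (fun s : ℝ => Complex.exp (Complex.I * (L 2 2 : ℝ) * (cl s : ℝ)))
        (Complex.I * (L 2 2 : ℝ) * Complex.exp (Complex.I * (L 2 2 : ℝ) * (t : ℝ)))
        (Icc (0:ℝ) 1) t := by
      have h := (expDeriv (Complex.I * (L 2 2 : ℝ)) t).hasDerivWithinAt (s := Icc (0:ℝ) 1)
      refine h.congr (fun y hy => ?_) ?_
      · rw [cl_eq hy]
      · rw [cl_eq ht]
    have hC := hE.const_mul (![0, 0, ((L 0 3 : ℝ) : ℂ), (-(L 0 2 : ℝ) : ℂ)] α)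
    have : (fun s => sol1 L s α)
        = fun s => (![0, 0, ((L 0 3 : ℝ) : ℂ), (-(L 0 2 : ℝ) : ℂ)] α) *
            Complex.exp (Complex.I * (L 2 2 : ℝ) * (cl s : ℝ)) := rfl
    rw [this]
    refine hC.congr_deriv ?_
    symm
    have hct : (cl t : ℝ) = t := cl_eq ht
    fin_cases α <;>
      simp only [sol1, Fin.sum_univ_four, hct, Matrix.cons_val_zero, Matrix.cons_val_one,
        Matrix.head_cons, Matrix.cons_val_two, Matrix.tail_cons, Matrix.cons_val_three,
        Fin.isValue, Fin.mk_zero, Fin.mk_one, Fin.reduceFinMk]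
    · ring
    · linear_combination (-(Complex.I) *
        Complex.exp (Complex.I * ((L 2 2 : ℝ) : ℂ) * (t : ℂ))) * hdetC
    · linear_combination (-(Complex.I) *
        Complex.exp (Complex.I * ((L 2 2 : ℝ) : ℂ) * (t : ℂ)) * ((L 0 2 : ℝ) : ℂ)) * hααC
    · linear_combination (Complex.I *
        Complex.exp (Complex.I * ((L 2 2 : ℝ) : ℂ) * (t : ℂ)) * ((L 0 3 : ℝ) : ℂ)) * h32C
        + (Complex.I *
        Complex.exp (Complex.I * ((L 2 2 : ℝ) : ℂ) * (t : ℂ)) * ((L 0 2 : ℝ) : ℂ)) * hdiagC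
  · intro t ht
    have h : cl t = cl 0 := by rw [cl_le ht, cl_le le_rfl]
    funext α
    simp only [sol1, h]
  · intro t ht
    have h : cl t = cl 1 := by rw [cl_ge ht, cl_ge le_rfl]
    funext α
    simp only [sol1, h]
  · intro β hβ t ht
    simp only [Set.mem_insert_iff, Set.mem_singleton_iff] at hβ
    rcases hβ with h | h <;> subst h <;> simp [sol1]

lemma solSpace_eq_bot (L : Matrix (Fin 4) (Fin 4) ℝ) (hαα : L 2 3 = 0) (h32 : L 3 2 = 0)
    (hdet : L 0 2 * L 1 3 - L 0 3 * L 1 2 ≠ 0) :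
    solSpace (fun a b => L a b) ({0, 1} : Set (Fin 4)) = ⊥ := by
  rw [eq_bot_iff]
  intro u hu
  obtain ⟨hu0, hu1, heq0, heq1, -, -⟩ := sol_facts L hαα h32 u hu
  have hdC : ((L 0 2 * L 1 3 - L 0 3 * L 1 2 : ℝ) : ℂ) ≠ 0 := Complex.ofReal_ne_zero.mpr hdet
  have hzero : ∀ t ∈ Icc (0:ℝ) 1, ∀ α, u t α = 0 := by
    intro t ht α
    have e0 := heq0 t ht
    have e1 := heq1 t ht
    have hx : ((L 0 2 * L 1 3 - L 0 3 * L 1 2 : ℝ) : ℂ) * u t 2 = 0 := by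
      push_cast
      linear_combination ((L 1 3 : ℝ) : ℂ) * e0 - ((L 0 3 : ℝ) : ℂ) * e1
    have hy : ((L 0 2 * L 1 3 - L 0 3 * L 1 2 : ℝ) : ℂ) * u t 3 = 0 := by
      push_cast
      linear_combination ((L 0 2 : ℝ) : ℂ) * e1 - ((L 1 2 : ℝ) : ℂ) * e0
    fin_cases α
    · exact hu0 t
    · exact hu1 t
    · exact (mul_eq_zero.mp hx).resolve_left hdC
    · exact (mul_eq_zero.mp hy).resolve_left hdC
  obtain ⟨-, h2, h3, -⟩ := hu
  rw [Submodule.mem_bot]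
  funext t α
  show u t α = 0
  rcases le_total t 0 with h | h
  · rw [h2 t h]; exact hzero 0 ⟨le_rfl, zero_le_one⟩ α
  rcases le_total 1 t with h' | h'
  · rw [h3 t h']; exact hzero 1 ⟨zero_le_one, le_rfl⟩ α
  · exact hzero t ⟨h, h'⟩ α

lemma solSpace_eq_span (L : Matrix (Fin 4) (Fin 4) ℝ) (hαα : L 2 3 = 0) (h32 : L 3 2 = 0)
    (hdiag : L 2 2 = L 3 3) (h03 : L 0 3 ≠ 0)
    (hdet : L 0 2 * L 1 3 - L 0 3 * L 1 2 = 0) :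
    solSpace (fun a b => L a b) ({0, 1} : Set (Fin 4)) = Submodule.span ℂ {sol1 L} := by
  apply le_antisymm
  · intro u hu
    obtain ⟨hu0, hu1, heq0, heq1, hode2, hode3⟩ := sol_facts L hαα h32 u hu
    obtain ⟨-, h2, h3, -⟩ := hu
    rw [Submodule.mem_span_singleton]
    have h03C : ((L 0 3 : ℝ) : ℂ) ≠ 0 := Complex.ofReal_ne_zero.mpr h03
    refine ⟨u 0 2 / ((L 0 3 : ℝ) : ℂ), ?_⟩
    have hu03 : ((L 0 3 : ℝ) : ℂ) * u 0 3 = -((L 0 2 : ℝ) : ℂ) * u 0 2 := by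
      linear_combination heq0 0 ⟨le_rfl, zero_le_one⟩
    have key : ∀ t ∈ Icc (0:ℝ) 1, (u 0 2 / ((L 0 3 : ℝ) : ℂ)) • sol1 L t = u t := by
      intro t ht
      funext α
      have hct : cl t = t := cl_eq ht
      show (u 0 2 / ((L 0 3 : ℝ) : ℂ)) * sol1 L t α = u t α
      fin_cases α
      · simp [sol1, hu0 t]
      · simp [sol1, hu1 t]
      · simp only [sol1, hct, Matrix.cons_val_zero, Matrix.cons_val_one,
          Matrix.head_cons, Matrix.cons_val_two, Matrix.tail_cons, Matrix.cons_val_three,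
          Fin.isValue, Fin.mk_zero, Fin.mk_one, Fin.reduceFinMk]
        rw [hode2 t ht]
        field_simp
      · simp only [sol1, hct, Matrix.cons_val_zero, Matrix.cons_val_one,
          Matrix.head_cons, Matrix.cons_val_two, Matrix.tail_cons, Matrix.cons_val_three,
          Fin.isValue, Fin.mk_zero, Fin.mk_one, Fin.reduceFinMk]
        rw [hode3 t ht, ← hdiag]
        field_simp
        linear_combination -hu03
    funext t
    show (u 0 2 / ((L 0 3 : ℝ) : ℂ)) • sol1 L t = u t
    rcases le_total t 0 with h | h
    · have hs : sol1 L t = sol1 L 0 := by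
        funext α; simp only [sol1]; rw [cl_le h, cl_le le_rfl]
      rw [hs, h2 t h]
      exact key 0 ⟨le_rfl, zero_le_one⟩
    rcases le_total 1 t with h' | h'
    · have hs : sol1 L t = sol1 L 1 := by
        funext α; simp only [sol1]; rw [cl_ge h', cl_ge le_rfl]
      rw [hs, h3 t h']
      exact key 1 ⟨zero_le_one, le_rfl⟩
    · exact key t ⟨h, h'⟩
  · rw [Submodule.span_le, Set.singleton_subset_iff]
    exact sol1_mem L hαα h32 hdiag hdet

end Aux2

/-- the 4-cycle example with `L(α₁,α₁) = L(α₂,α₂)`.  Indices `0,1,2,3`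
of `Fin 4` stand for `β₁, β₂, α₁, α₂`.  The space of C¹ solutions of `∂ₜu = i·L u`
vanishing at `β₁, β₂` for `t ∈ [0,1]` has dimension `2 − rank (L(β_j,α_k))_{j,k}`. -/
theorem stmt_9 (L : Matrix (Fin 4) (Fin 4) ℝ) (hsym : L.IsSymm)
    (hββ : L 0 1 = 0) (hαα : L 2 3 = 0)
    (hβα : ∀ j ∈ ({0, 1} : Set (Fin 4)), ∀ k ∈ ({2, 3} : Set (Fin 4)), L j k ≠ 0)
    (hdiag : L 2 2 = L 3 3) :
    Module.finrank ℂ (solSpace (fun a b => L a b) ({0, 1} : Set (Fin 4)))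
      = 2 - (!![L 0 2, L 0 3; L 1 2, L 1 3] : Matrix (Fin 2) (Fin 2) ℝ).rank := by
  have h02 : L 0 2 ≠ 0 := hβα 0 (by simp) 2 (by simp)
  have h03 : L 0 3 ≠ 0 := hβα 0 (by simp) 3 (by simp)
  have h12 : L 1 2 ≠ 0 := hβα 1 (by simp) 2 (by simp)
  have h13 : L 1 3 ≠ 0 := hβα 1 (by simp) 3 (by simp)
  have h32 : L 3 2 = 0 := (hsym.apply 2 3).trans hαα
  by_cases hdet : L 0 2 * L 1 3 - L 0 3 * L 1 2 = 0
  · have hrank : (!![L 0 2, L 0 3; L 1 2, L 1 3] : Matrix (Fin 2) (Fin 2) ℝ).rank = 1 := by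
      have hle : (!![L 0 2, L 0 3; L 1 2, L 1 3] : Matrix (Fin 2) (Fin 2) ℝ).rank ≤ 1 := by
        have hfac : (!![L 0 2, L 0 3; L 1 2, L 1 3] : Matrix (Fin 2) (Fin 2) ℝ)
            = !![L 0 2; L 1 2] * !![1, L 0 3 / L 0 2] := by
          ext i j
          fin_cases i <;> fin_cases j <;>
            simp [Matrix.mul_apply, Fin.sum_univ_one] <;> field_simp <;> linarith
        have ha : (!![L 0 2, L 0 3; L 1 2, L 1 3] : Matrix (Fin 2) (Fin 2) ℝ).rank
            ≤ (!![L 0 2; L 1 2] : Matrix (Fin 2) (Fin 1) ℝ).rank := by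
          rw [hfac]; exact Matrix.rank_mul_le_left _ _
        have hb : (!![L 0 2; L 1 2] : Matrix (Fin 2) (Fin 1) ℝ).rank ≤ 1 := by
          simpa using Matrix.rank_le_card_width (!![L 0 2; L 1 2] : Matrix (Fin 2) (Fin 1) ℝ)
        omega
      have hne : (!![L 0 2, L 0 3; L 1 2, L 1 3] : Matrix (Fin 2) (Fin 2) ℝ).rank ≠ 0 := by
        intro h0
        have hr : Module.finrank ℝ (LinearMap.range
            (!![L 0 2, L 0 3; L 1 2, L 1 3] : Matrix (Fin 2) (Fin 2) ℝ).mulVecLin) = 0 := h0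
        have hbot := Submodule.finrank_eq_zero.mp hr
        have h1 : (!![L 0 2, L 0 3; L 1 2, L 1 3] : Matrix (Fin 2) (Fin 2) ℝ).mulVecLin
            ![1, 0] = 0 := by
          have : (!![L 0 2, L 0 3; L 1 2, L 1 3] : Matrix (Fin 2) (Fin 2) ℝ).mulVecLin ![1, 0]
              ∈ LinearMap.range
                (!![L 0 2, L 0 3; L 1 2, L 1 3] : Matrix (Fin 2) (Fin 2) ℝ).mulVecLin :=
            LinearMap.mem_range_self _ _
          rw [hbot, Submodule.mem_bot] at this
          exact this
        have h2 := congrFun h1 0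
        simp [Matrix.mulVecLin_apply, Matrix.mulVec, dotProduct,
          Fin.sum_univ_two] at h2
        exact h02 h2
      omega
    have hspan := solSpace_eq_span L hαα h32 hdiag h03 hdet
    have hne : sol1 L ≠ 0 := by
      intro h
      have h' := congrFun (congrFun h 0) 2
      simp only [sol1, Pi.zero_apply, Matrix.cons_val_zero, Matrix.cons_val_one,
        Matrix.head_cons, Matrix.cons_val_two, Matrix.tail_cons] at h'
      rcases mul_eq_zero.mp h' with h'' | h''
      · exact h03 (by exact_mod_cast h'')
      · exact Complex.exp_ne_zero _ h''
    rw [hspan, hrank, finrank_span_singleton hne]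
  · have hunit : IsUnit (!![L 0 2, L 0 3; L 1 2, L 1 3] : Matrix (Fin 2) (Fin 2) ℝ) := by
      apply (Matrix.isUnit_iff_isUnit_det _).mpr
      rw [Matrix.det_fin_two_of]
      exact isUnit_iff_ne_zero.mpr (by intro h; exact hdet (by linarith))
    have hrank := Matrix.rank_of_isUnit _ hunit
    rw [solSpace_eq_bot L hαα h32 hdet, hrank]
    simp [finrank_bot]
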